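/- Let $\sigma$ be a rational polyhedral cone in $N_{\mathbb{R}}$ which is not equal to $\{0\}$, let $b$ denote its barycenter (e.g., the sum of the primitive generators of its rays) and $\rho = \mathbb{R}_{\ge 0} b$. Let $\Delta_{\partial}$ be a fan subdividing the boundary $\partial\sigma$ (union of proper faces of $\sigma$). Then the collection of cones consisting of (i) the cones of $\Delta_{\partial}$ and (ii) the cones $\mathrm{Conv}(\rho, \tau) = \rho + \tau$ for $\tau \in \Delta_{\partial}$, forms a fan which is a subdivision of $\sigma$ (its support equals $\sigma$). -/

import Mathlib

open scoped RealInnerProductSpace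

noncomputable def myCore (V : Type*) [AddCommGroup V] [Module ℝ V] [FiniteDimensional ℝ V] :
    InnerProductSpace.Core ℝ V :=
  let B := Module.finBasis ℝ V
  { inner := fun x y => ∑ i, B.equivFun x i * B.equivFun y i
    conj_inner_symm := fun x y => by
      simp [starRingEnd_apply, mul_comm]
    re_inner_nonneg := fun x => by
      simp only [RCLike.re_to_real]
      exact Finset.sum_nonneg fun i _ => mul_self_nonneg _
    definite := fun x hx => by
      have h : ∀ i ∈ Finset.univ, B.equivFun x i * B.equivFun x i = 0 := by
        intro i _
        exact ((Finset.sum_eq_zero_iff_of_nonneg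
          (fun i (_ : i ∈ (Finset.univ : Finset (Fin (Module.finrank ℝ V)))) =>
            mul_self_nonneg (B.equivFun x i))).mp hx) i (Finset.mem_univ i)
      have h2 : B.equivFun x = 0 := by
        ext i
        have := h i (Finset.mem_univ i)
        have := mul_self_eq_zero.mp this
        simpa using this
      have := B.equivFun.map_eq_zero_iff.mp h2
      exact this
    add_left := fun x y z => by
      simp [map_add, add_mul, Finset.sum_add_distrib]
    smul_left := fun x y r => by
      simp only [map_smul, Pi.smul_apply, smul_eq_mul, starRingEnd_apply, star_trivial,
        Finset.mul_sum]
      exact Finset.sum_congr rfl fun i _ => by ring }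


section ClosedCone
variable {H : Type*} [NormedAddCommGroup H] [NormedSpace ℝ H] [FiniteDimensional ℝ H]

/-- The cone generated by a finite set not containing `0`, assuming pointedness, is closed. -/
lemma isClosed_finset_cone (s : Finset H) (h0 : (0 : H) ∉ s) (hsne : s.Nonempty)
    (hpointed : ∀ x ∈ {x : H | ∃ c : H → ℝ, (∀ v, 0 ≤ c v) ∧ x = ∑ v ∈ s, c v • v},
      -x ∈ {x : H | ∃ c : H → ℝ, (∀ v, 0 ≤ c v) ∧ x = ∑ v ∈ s, c v • v} → x = 0) :
    IsClosed {x : H | ∃ c : H → ℝ, (∀ v, 0 ≤ c v) ∧ x = ∑ v ∈ s, c v • v} := by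
  classical
  set σ : Set H := {x : H | ∃ c : H → ℝ, (∀ v, 0 ≤ c v) ∧ x = ∑ v ∈ s, c v • v} with hσdef
  set F : ({v // v ∈ s} → ℝ) →ₗ[ℝ] H :=
    Fintype.linearCombination ℝ (fun i : {v // v ∈ s} => (i : H)) with hFdef
  have hFapp : ∀ c : {v // v ∈ s} → ℝ, F c = ∑ i, c i • (i : H) := fun c => rfl
  have hFcont : Continuous F := F.continuous_of_finiteDimensional
  -- σ as an image
  have himg : σ = F '' {c | ∀ i, 0 ≤ c i} := by
    ext x
    constructor
    · rintro ⟨c, hc, rfl⟩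
      refine ⟨fun i => c i, fun i => hc i, ?_⟩
      rw [hFapp, ← Finset.sum_coe_sort s (fun v => c v • v)]
    · rintro ⟨c, hc, rfl⟩
      refine ⟨fun v => if h : v ∈ s then c ⟨v, h⟩ else 0, ?_, ?_⟩
      · intro v
        by_cases h : v ∈ s
        · simpa [h] using hc ⟨v, h⟩
        · simp [h]
      · rw [hFapp, ← Finset.sum_coe_sort s (fun v => (if h : v ∈ s then c ⟨v, h⟩ else 0) • v)]
        exact Finset.sum_congr rfl fun i _ => by simp [i.2]
  -- the standard simplex is compact
  have hι : Nonempty {v // v ∈ s} := ⟨⟨hsne.choose, hsne.choose_spec⟩⟩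
  set Δs : Set ({v // v ∈ s} → ℝ) := {c | (∀ i, 0 ≤ c i) ∧ ∑ i, c i = 1} with hΔdef
  have hnonneg_closed : ∀ (b : ℝ), IsClosed {c : {v // v ∈ s} → ℝ | ∀ i, b ≤ c i} := by
    intro b
    have : {c : {v // v ∈ s} → ℝ | ∀ i, b ≤ c i} = ⋂ i, {c | b ≤ c i} := by
      ext c; simp [Set.mem_iInter]
    rw [this]
    exact isClosed_iInter fun i => isClosed_le continuous_const (continuous_apply i)
  have hΔclosed : IsClosed Δs :=
    (hnonneg_closed 0).inter
      (isClosed_eq (continuous_finset_sum _ fun i _ => continuous_apply i) continuous_const)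
  have hΔsub : Δs ⊆ Set.Icc (0 : {v // v ∈ s} → ℝ) 1 := by
    rintro c ⟨hc0, hc1⟩
    refine ⟨fun i => hc0 i, fun i => ?_⟩
    calc c i ≤ ∑ j, c j := Finset.single_le_sum (fun j _ => hc0 j) (Finset.mem_univ i)
    _ = 1 := hc1
  have hΔcompact : IsCompact Δs := (isCompact_Icc).of_isClosed_subset hΔclosed hΔsub
  have hΔne : Δs.Nonempty := by
    obtain ⟨v, hv⟩ := hsne
    refine ⟨fun i => if i = ⟨v, hv⟩ then 1 else 0, fun i => by positivity, ?_⟩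
    simp
  -- minimum of ‖F c‖ on the simplex
  obtain ⟨c₀, hc₀Δ, hmin⟩ := hΔcompact.exists_isMinOn hΔne (hFcont.norm.continuousOn)
  set m : ℝ := ‖F c₀‖ with hmdef
  have hm : 0 < m := by
    rw [hmdef, norm_pos_iff]
    intro hF0
    obtain ⟨i₀, hi₀⟩ : ∃ i₀, c₀ i₀ ≠ 0 := by
      by_contra h
      push_neg at h
      have : (1 : ℝ) = 0 := by rw [← hc₀Δ.2]; exact Finset.sum_eq_zero fun i _ => h i
      norm_num at this
    set d : {v // v ∈ s} → ℝ := fun i => if i = i₀ then c₀ i else 0 with hddef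
    have hFd : F d = c₀ i₀ • (i₀ : H) := by
      rw [hFapp]
      simp [hddef, Finset.sum_ite_eq']
    have hxσ : F d ∈ σ := himg ▸ ⟨d, fun i => by by_cases h : i = i₀ <;> simp [hddef, h, hc₀Δ.1 i, hc₀Δ.1 i₀], rfl⟩
    have hnxσ : -(F d) ∈ σ := by
      rw [himg]
      refine ⟨c₀ - d, fun i => ?_, ?_⟩
      · by_cases h : i = i₀ <;> simp [hddef, h, hc₀Δ.1 i]
      · rw [map_sub, hF0, zero_sub]
    have := hpointed _ hxσ hnxσ
    rw [hFd, smul_eq_zero] at this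
    rcases this with h | h
    · exact hi₀ h
    · exact h0 (h ▸ i₀.2)
  -- lower bound on ‖F c‖
  have hbound : ∀ c : {v // v ∈ s} → ℝ, (∀ i, 0 ≤ c i) → m * (∑ i, c i) ≤ ‖F c‖ := by
    intro c hc
    rcases eq_or_lt_of_le (Finset.sum_nonneg
        fun i (_ : i ∈ (Finset.univ : Finset {v // v ∈ s})) => hc i) with h | h
    · have hc0 : c = 0 := funext fun i =>
        (Finset.sum_eq_zero_iff_of_nonneg (fun j _ => hc j)).mp h.symm i (Finset.mem_univ i)
      simp [hc0]
    · set t : ℝ := ∑ i, c i with htdef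
      have hΔmem : t⁻¹ • c ∈ Δs := by
        refine ⟨fun i => mul_nonneg (inv_nonneg.mpr h.le) (hc i), ?_⟩
        simp only [Pi.smul_apply, smul_eq_mul, ← Finset.mul_sum, ← htdef]
        exact inv_mul_cancel₀ h.ne'
      have := hmin hΔmem
      simp only [Set.mem_setOf_eq] at this
      have hFsmul : ‖F (t⁻¹ • c)‖ = t⁻¹ * ‖F c‖ := by
        rw [map_smul, norm_smul, Real.norm_eq_abs, abs_of_pos (by positivity)]
      rw [hFsmul] at this
      calc m * t ≤ (t⁻¹ * ‖F c‖) * t := by nlinarith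
      _ = ‖F c‖ := by field_simp
  -- sequential closedness
  have hseq : IsSeqClosed σ := by
    intro u p hu hup
    have hC : ∃ C : ℝ, ∀ n, ‖u n‖ ≤ C := by
      obtain ⟨C, hC⟩ := (hup.norm).bddAbove_range
      exact ⟨C, fun n => hC ⟨n, rfl⟩⟩
    obtain ⟨C, hC⟩ := hC
    choose cs hcs using fun n => (himg ▸ hu n : u n ∈ F '' {c | ∀ i, 0 ≤ c i})
    have hcsb : ∀ n, cs n ∈ Set.Icc (0 : {v // v ∈ s} → ℝ) (fun _ => C / m) := by
      intro n
      have hnn := (hcs n).1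
      have hsum : m * (∑ i, cs n i) ≤ C := by
        calc m * (∑ i, cs n i) ≤ ‖F (cs n)‖ := hbound _ hnn
        _ = ‖u n‖ := by rw [(hcs n).2]
        _ ≤ C := hC n
      refine ⟨fun i => hnn i, fun i => ?_⟩
      have h1 : cs n i ≤ ∑ j, cs n j := Finset.single_le_sum (fun j _ => hnn j) (Finset.mem_univ i)
      have h2 : ∑ j, cs n j ≤ C / m := by
        rw [le_div_iff₀ hm]
        linarith [hsum]
      exact le_trans h1 h2
    obtain ⟨c, hcmem, φ, hφmono, hφtend⟩ := (isCompact_Icc).tendsto_subseq hcsb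
    have h1 : Filter.Tendsto (fun k => F (cs (φ k))) Filter.atTop (nhds (F c)) :=
      (hFcont.tendsto c).comp hφtend
    have h2 : Filter.Tendsto (fun k => F (cs (φ k))) Filter.atTop (nhds p) := by
      have : (fun k => F (cs (φ k))) = fun k => u (φ k) := funext fun k => (hcs (φ k)).2
      rw [this]
      exact hup.comp hφmono.tendsto_atTop
    have hpc : p = F c := tendsto_nhds_unique h2 h1
    rw [himg]
    exact ⟨c, fun i => hcmem.1 i, hpc.symm⟩
  exact hseq.isClosed
end ClosedCone

section Key
variable {H : Type*} [NormedAddCommGroup H] [InnerProductSpace ℝ H] [FiniteDimensional ℝ H]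

lemma star_key (s : Finset H) (σ : Set H)
    (hσ : σ = {x | ∃ c : H → ℝ, (∀ v, 0 ≤ c v) ∧ x = ∑ v ∈ s, c v • v})
    (hpointed : ∀ x, x ∈ σ → -x ∈ σ → x = 0)
    (hnontriv : ∃ x ∈ σ, x ≠ 0)
    (b : H) (hb : b ∈ σ)
    (hbrel : ∀ φ : H →ₗ[ℝ] ℝ, (∀ z ∈ σ, 0 ≤ φ z) → (∃ z ∈ σ, 0 < φ z) → 0 < φ b)
    (x : H) (hx : x ∈ σ) :
    ∃ t : ℝ, 0 ≤ t ∧ (x - t • b ∈ σ) ∧ ∃ φ : H →ₗ[ℝ] ℝ,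
      (∀ z ∈ σ, 0 ≤ φ z) ∧ (∃ z ∈ σ, 0 < φ z) ∧ φ (x - t • b) = 0 := by
  classical
  haveI : CompleteSpace H := FiniteDimensional.complete ℝ H
  -- basic cone properties
  have hσ0 : (0 : H) ∈ σ := by
    rw [hσ]; exact ⟨0, fun v => le_rfl, by simp⟩
  have hadd : ∀ a c : H, a ∈ σ → c ∈ σ → a + c ∈ σ := by
    rw [hσ]
    rintro _ _ ⟨c₁, hc₁, rfl⟩ ⟨c₂, hc₂, rfl⟩
    exact ⟨c₁ + c₂, fun v => add_nonneg (hc₁ v) (hc₂ v),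
      by simp [add_smul, Finset.sum_add_distrib]⟩
  have hsmul : ∀ (t : ℝ) (a : H), 0 ≤ t → a ∈ σ → t • a ∈ σ := by
    rw [hσ]
    rintro t _ ht ⟨c, hc, rfl⟩
    exact ⟨fun v => t * c v, fun v => mul_nonneg ht (hc v),
      by simp [Finset.smul_sum, smul_smul]⟩
  -- closedness
  have hclosed : IsClosed σ := by
    have key : ∀ c : H → ℝ, ∑ v ∈ s.erase 0, c v • v = ∑ v ∈ s, c v • v :=
      fun c => Finset.sum_erase s (by simp)
    have hs' : σ = {x : H | ∃ c : H → ℝ, (∀ v, 0 ≤ c v) ∧ x = ∑ v ∈ s.erase 0, c v • v} := by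
      rw [hσ]
      ext x
      constructor
      · rintro ⟨c, hc, rfl⟩
        exact ⟨c, hc, (key c).symm⟩
      · rintro ⟨c, hc, rfl⟩
        exact ⟨c, hc, (key c).symm ▸ rfl⟩
    rcases Finset.eq_empty_or_nonempty (s.erase 0) with he | hne
    · have : σ = {0} := by
        rw [hs', he]
        ext x
        constructor
        · rintro ⟨c, hc, rfl⟩; simp
        · rintro rfl; exact ⟨0, fun v => le_rfl, by simp⟩
      rw [this]; exact isClosed_singleton
    · rw [hs']
      exact isClosed_finset_cone _ (by simp) hne (by rw [← hs']; exact hpointed)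
  -- separation
  have hsep : ∀ p : H, p ∉ σ → ∃ v : H, (∀ z ∈ σ, 0 ≤ ⟪z, v⟫) ∧ ⟪v, p⟫ < 0 := by
    intro p hp
    set K : ProperCone ℝ H :=
      { carrier := σ
        smul_mem' := fun t a ha => hsmul t a t.2 ha
        add_mem' := fun {a c} ha hc => hadd a c ha hc
        zero_mem' := hσ0
        isClosed' := hclosed } with hK
    obtain ⟨v, hv1, hv2⟩ :=
      K.hyperplane_separation' (x₀ := p) hp
    exact ⟨v, fun z hz => hv1 z hz, by rw [real_inner_comm]; exact hv2⟩
  -- span of σ and orthogonal projection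
  set U : Submodule ℝ H := Submodule.span ℝ σ with hU
  haveI : CompleteSpace U := FiniteDimensional.complete ℝ U
  have hσU : σ ⊆ (U : Set H) := Submodule.subset_span
  have hproj : ∀ z : H, z ∈ U → ∀ v : H, ⟪z, v⟫ = ⟪z, (U.orthogonalProjection v : H)⟫ := by
    intro z hz v
    have h1 : v - U.orthogonalProjection v ∈ Uᗮ := Submodule.sub_starProjection_mem_orthogonal (K := U) v
    have h2 : ⟪z, v - U.orthogonalProjection v⟫ = 0 := (Submodule.mem_orthogonal U _).mp h1 z hz
    rw [inner_sub_right] at h2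
    linarith
  -- functional from a vector
  have hfun : ∀ u : H, u ∈ U → (∀ z ∈ σ, 0 ≤ ⟪z, u⟫) → u ≠ 0 → ∃ z ∈ σ, 0 < ⟪z, u⟫ := by
    intro u hu hnn hne
    by_contra h
    push_neg at h
    have hzero : ∀ z ∈ σ, ⟪u, z⟫ = 0 := fun z hz => by
      rw [real_inner_comm]; exact le_antisymm (h z hz) (hnn z hz)
    have hUker : U ≤ LinearMap.ker (innerSL ℝ u).toLinearMap := by
      rw [hU, Submodule.span_le]
      intro z hz
      simp only [SetLike.mem_coe, LinearMap.mem_ker, ContinuousLinearMap.coe_coe, innerSL_apply_apply]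
      exact hzero z hz
    have : ⟪u, u⟫ = 0 := by
      have := hUker hu
      simpa using this
    exact hne (inner_self_eq_zero.mp this)
  -- the compact set D
  set D : Set H := {u : H | u ∈ U ∧ ‖u‖ = 1 ∧ ∀ z ∈ σ, 0 ≤ ⟪z, u⟫} with hD
  have hnormalize : ∀ u : H, u ∈ U → (∀ z ∈ σ, 0 ≤ ⟪z, u⟫) → u ≠ 0 → ‖u‖⁻¹ • u ∈ D := by
    intro u hu hnn hne
    have hnorm : ‖u‖ ≠ 0 := norm_ne_zero_iff.mpr hne
    refine ⟨U.smul_mem _ hu, ?_, fun z hz => ?_⟩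
    · rw [norm_smul, Real.norm_eq_abs, abs_inv, abs_norm, inv_mul_cancel₀ hnorm]
    · rw [real_inner_smul_right]
      exact mul_nonneg (inv_nonneg.mpr (norm_nonneg u)) (hnn z hz)
  have hDclosed : IsClosed D := by
    have : D = (U : Set H) ∩ ({u : H | ‖u‖ = 1} ∩ ⋂ z ∈ σ, {u : H | 0 ≤ ⟪z, u⟫}) := by
      ext u; simp [hD, Set.mem_iInter, and_assoc]
    rw [this]
    refine (U.closed_of_finiteDimensional).inter
      ((isClosed_eq continuous_norm continuous_const).inter ?_)
    exact isClosed_biInter fun z _ =>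
      isClosed_le continuous_const (continuous_const.inner continuous_id)
  have hDcompact : IsCompact D := by
    refine (isCompact_sphere (0 : H) 1).of_isClosed_subset hDclosed ?_
    intro u hu
    simp [mem_sphere_iff_norm, hu.2.1]
  have hDne : D.Nonempty := by
    obtain ⟨x₀, hx₀, hx₀ne⟩ := hnontriv
    have hnx₀ : -x₀ ∉ σ := fun h => hx₀ne (hpointed x₀ hx₀ h)
    obtain ⟨v, hv1, hv2⟩ := hsep _ hnx₀
    set u : H := (U.orthogonalProjection v : H) with hu
    have hunn : ∀ z ∈ σ, 0 ≤ ⟪z, u⟫ := fun z hz => by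
      rw [← hproj z (hσU hz) v]; exact hv1 z hz
    have hx₀u : 0 < ⟪x₀, u⟫ := by
      rw [← hproj x₀ (hσU hx₀) v]
      rw [inner_neg_right] at hv2
      rw [real_inner_comm]
      linarith
    have hune : u ≠ 0 := by
      intro h
      rw [h, inner_zero_right] at hx₀u
      exact lt_irrefl 0 hx₀u
    exact ⟨_, hnormalize u (U.orthogonalProjection v).2 hunn hune⟩
  have hDpos : ∀ u ∈ D, 0 < ⟪b, u⟫ := by
    rintro u ⟨huU, hunorm, hunn⟩
    have hune : u ≠ 0 := by intro h; rw [h, norm_zero] at hunorm; norm_num at hunorm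
    obtain ⟨z, hz, hzpos⟩ := hfun u huU hunn hune
    have := hbrel (innerSL ℝ u).toLinearMap
      (fun w hw => by
        simp only [ContinuousLinearMap.coe_coe, innerSL_apply_apply]
        rw [real_inner_comm]; exact hunn w hw)
      ⟨z, hz, by
        simp only [ContinuousLinearMap.coe_coe, innerSL_apply_apply]
        rw [real_inner_comm]; exact hzpos⟩
    simpa [real_inner_comm] using this
  -- minimize the ratio over D
  have hfcont : ContinuousOn (fun u : H => ⟪x, u⟫ / ⟪b, u⟫) D := by
    refine ContinuousOn.div ?_ ?_ (fun u hu => (hDpos u hu).ne')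
    · exact (continuous_const.inner continuous_id).continuousOn
    · exact (continuous_const.inner continuous_id).continuousOn
  obtain ⟨u₀, hu₀D, hmin⟩ := hDcompact.exists_isMinOn hDne hfcont
  set T : ℝ := ⟪x, u₀⟫ / ⟪b, u₀⟫ with hT
  have hT0 : 0 ≤ T := div_nonneg (hu₀D.2.2 x hx) (hDpos u₀ hu₀D).le
  set y : H := x - T • b with hy
  have hyU : y ∈ U := U.sub_mem (hσU hx) (U.smul_mem _ (hσU hb))
  have hinner_y : ∀ u : H, ⟪y, u⟫ = ⟪x, u⟫ - T * ⟪b, u⟫ := by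
    intro u
    rw [hy, inner_sub_left, real_inner_smul_left]
  have hyD : ∀ u ∈ D, 0 ≤ ⟪y, u⟫ := by
    intro u hu
    have h1 : T ≤ ⟪x, u⟫ / ⟪b, u⟫ := hmin hu
    have h2 : T * ⟪b, u⟫ ≤ ⟪x, u⟫ := (le_div_iff₀ (hDpos u hu)).mp h1
    rw [hinner_y]
    linarith
  have hyu₀ : ⟪y, u₀⟫ = 0 := by
    rw [hinner_y, hT, div_mul_cancel₀ _ (hDpos u₀ hu₀D).ne', sub_self]
  -- y satisfies all dual constraints, hence lies in σ
  have hydual : ∀ v : H, (∀ z ∈ σ, 0 ≤ ⟪z, v⟫) → 0 ≤ ⟪y, v⟫ := by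
    intro v hv
    set u : H := (U.orthogonalProjection v : H) with hu
    have hyv : ⟪y, v⟫ = ⟪y, u⟫ := hproj y hyU v
    have hunn : ∀ z ∈ σ, 0 ≤ ⟪z, u⟫ := fun z hz => by
      rw [← hproj z (hσU hz) v]; exact hv z hz
    by_cases hune : u = 0
    · rw [hyv, hune, inner_zero_right]
    · have hmem := hnormalize u (U.orthogonalProjection v).2 hunn hune
      have := hyD _ hmem
      rw [real_inner_smul_right] at this
      have hpos : 0 < ‖u‖⁻¹ := inv_pos.mpr (norm_pos_iff.mpr hune)
      rw [hyv]
      nlinarith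
  have hyσ : y ∈ σ := by
    by_contra hyn
    obtain ⟨v, hv1, hv2⟩ := hsep y hyn
    have := hydual v hv1
    rw [real_inner_comm] at hv2
    linarith
  refine ⟨T, hT0, hyσ, (innerSL ℝ u₀).toLinearMap, fun z hz => ?_, ⟨b, hb, ?_⟩, ?_⟩
  · simp only [ContinuousLinearMap.coe_coe, innerSL_apply_apply]
    rw [real_inner_comm]
    exact hu₀D.2.2 z hz
  · simp only [ContinuousLinearMap.coe_coe, innerSL_apply_apply]
    rw [real_inner_comm]
    exact hDpos u₀ hu₀D
  · simp only [ContinuousLinearMap.coe_coe, innerSL_apply_apply]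
    rw [real_inner_comm]
    exact hyu₀

end Key

/-- Star (coning) subdivision.  Let `σ ≠ {0}` be a pointed rational
polyhedral cone, `b ≠ 0` a point of its relative interior (e.g. the barycenter), and
`ρ = ℝ≥0 · b`.  Let `Δ∂` be a fan subdividing the boundary `∂σ` (the union of proper
faces of `σ`).  Then the cones `Conv(ρ, τ) = ρ + τ` for `τ ∈ Δ∂`, together with the
cones of `Δ∂`, are contained in `σ` and their union is all of `σ`: the resulting fan is
a subdivision of `σ`. -/
theorem star_subdivision_support
    {V : Type*} [AddCommGroup V] [Module ℝ V] [FiniteDimensional ℝ V]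
    (s : Finset V) (σ : Set V)
    (hσ : σ = {x | ∃ c : V → ℝ, (∀ v, 0 ≤ c v) ∧ x = ∑ v ∈ s, c v • v})
    (hpointed : ∀ x, x ∈ σ → -x ∈ σ → x = 0)
    (hnontriv : ∃ x ∈ σ, x ≠ 0)
    (b : V) (hb : b ∈ σ) (hbne : b ≠ 0)
    (hbrel : ∀ φ : V →ₗ[ℝ] ℝ, (∀ z ∈ σ, 0 ≤ φ z) → (∃ z ∈ σ, 0 < φ z) → 0 < φ b)
    (bd : Set V)
    (hbd : bd = {x ∈ σ | ∃ φ : V →ₗ[ℝ] ℝ,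
      (∀ z ∈ σ, 0 ≤ φ z) ∧ (∃ z ∈ σ, 0 < φ z) ∧ φ x = 0})
    (Δ : Set (Set V))
    (hΔsub : ∀ τ ∈ Δ, τ ⊆ bd)
    (hΔcover : ⋃₀ Δ = bd) :
    (∀ τ ∈ Δ, {x | ∃ t : ℝ, 0 ≤ t ∧ ∃ y ∈ τ, x = t • b + y} ⊆ σ) ∧
    ((⋃₀ Δ) ∪ (⋃ τ ∈ Δ, {x | ∃ t : ℝ, 0 ≤ t ∧ ∃ y ∈ τ, x = t • b + y}) = σ) := by
  classical
  letI cV := myCore V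
  letI : NormedAddCommGroup V := cV.toNormedAddCommGroup
  letI : InnerProductSpace ℝ V := InnerProductSpace.ofCore cV.toCore
  have hσadd : ∀ a c : V, a ∈ σ → c ∈ σ → a + c ∈ σ := by
    rw [hσ]
    rintro _ _ ⟨c₁, hc₁, rfl⟩ ⟨c₂, hc₂, rfl⟩
    exact ⟨c₁ + c₂, fun v => add_nonneg (hc₁ v) (hc₂ v),
      by simp [add_smul, Finset.sum_add_distrib]⟩
  have hσsmul : ∀ (t : ℝ) (a : V), 0 ≤ t → a ∈ σ → t • a ∈ σ := by
    rw [hσ]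
    rintro t _ ht ⟨c, hc, rfl⟩
    exact ⟨fun v => t * c v, fun v => mul_nonneg ht (hc v),
      by simp [Finset.smul_sum, smul_smul]⟩
  have hbdσ : bd ⊆ σ := by rw [hbd]; exact fun z hz => hz.1
  have part1 : ∀ τ ∈ Δ, {x | ∃ t : ℝ, 0 ≤ t ∧ ∃ y ∈ τ, x = t • b + y} ⊆ σ := by
    rintro τ hτ x ⟨t, ht, y, hy, rfl⟩
    exact hσadd _ _ (hσsmul t b ht hb) (hbdσ (hΔsub τ hτ hy))
  refine ⟨part1, Set.Subset.antisymm ?_ ?_⟩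
  · rintro x (hx | hx)
    · exact hbdσ (hΔcover ▸ hx)
    · obtain ⟨τ, hτ, hxτ⟩ := Set.mem_iUnion₂.mp hx
      exact part1 τ hτ hxτ
  · intro x hx
    obtain ⟨t, ht, hyσ, φ, hφ1, hφ2, hφ3⟩ :=
      star_key s σ hσ hpointed hnontriv b hb hbrel x hx
    have hybd : x - t • b ∈ bd := by
      rw [hbd]; exact ⟨hyσ, φ, hφ1, hφ2, hφ3⟩
    rw [← hΔcover] at hybd
    obtain ⟨τ, hτ, hyτ⟩ := hybd
    right
    exact Set.mem_iUnion₂.mpr ⟨τ, hτ, t, ht, x - t • b, hyτ, by abel⟩
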